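/- Let 𝔤 be a Lie algebra, 𝔥 ⊆ 𝔤 a Lie subalgebra, with complement 𝔥^c. In the graded Lie algebra L = Λ^{•+1}𝔤*⊗𝔤 with the Nijenhuis–Richardson bracket, the subspace ker P = (Λ^{•+1}𝔤*⊗𝔥) ⊕ (⊕_{r+s=•+1, s≥1} Λ^r𝔥* ∧ Λ^s(𝔥^c)* ⊗ 𝔥^c) is a graded Lie subalgebra, where P: L → Λ^{•+1}𝔥*⊗𝔥^c is the projection φ⊗x ↦ (ι*φ)⊗p_{𝔥^c}(x) (ι: 𝔥 ↪ 𝔤 the inclusion). Moreover the image of the inclusion I: Λ^{•+1}𝔥*⊗𝔥^c → L, ψ⊗v ↦ (p_𝔥*ψ)⊗v, is an abelian graded Lie subalgebra, and the Lie bracket μ of 𝔤 lies in ker P if and only if 𝔥 is a Lie subalgebra. -/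

import Mathlib

open Finset

/-- Nijenhuis–Richardson composition (unshuffle sum), for arities `r+1` and `s+1`. -/
def nrComp {A : Type*} [AddCommGroup A] (r s : ℕ)
    (φ : (Fin (r + 1) → A) → A) (ψ : (Fin (s + 1) → A) → A) :
    (Fin (r + s + 1) → A) → A := fun x =>
  ∑ σ ∈ Finset.univ.filter (fun σ : Equiv.Perm (Fin (r + s + 1)) =>
      (∀ a b : Fin (r + s + 1), a < b → (b : ℕ) ≤ s → σ a < σ b) ∧
      (∀ a b : Fin (r + s + 1), a < b → s < (a : ℕ) → σ a < σ b)),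
    ((Equiv.Perm.sign σ : ℤ)) •
      φ (Fin.cons
          (ψ (fun i : Fin (s + 1) => x (σ ⟨(i : ℕ), by omega⟩)))
          (fun i : Fin r => x (σ ⟨s + 1 + (i : ℕ), by omega⟩)))

/-- The Nijenhuis–Richardson bracket `⟦φ, ψ⟧ = (-1)^{rs} φ∘ψ − ψ∘φ`. -/
def nrBracket {A : Type*} [AddCommGroup A] (r s : ℕ)
    (φ : (Fin (r + 1) → A) → A) (ψ : (Fin (s + 1) → A) → A) :
    (Fin (r + s + 1) → A) → A := fun x =>
  ((-1 : ℤ) ^ (r * s)) • nrComp r s φ ψ x -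
    nrComp s r ψ φ (fun i : Fin (s + r + 1) => x (Fin.cast (by omega) i))

variable {L : Type*} [LieRing L] [LieAlgebra ℝ L]

/-- Membership in `ker P`, where `P : Λ^{n}𝔤*⊗𝔤 → Λ^{n}𝔥*⊗𝔥^c` is the projection
`ξ ↦ p_{𝔥^c} ∘ ξ|_𝔥`: `ξ ∈ ker P` iff `p_{𝔥^c}(ξ(h₁,…,h_n)) = 0` whenever all `h_i ∈ 𝔥`.
This is exactly the subspace
`(Λ^n𝔤*⊗𝔥) ⊕ (⊕_{p+q=n, q≥1} Λ^p𝔥*∧Λ^q(𝔥^c)* ⊗ 𝔥^c)`. -/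
def inKerP (H Hc : Submodule ℝ L) (pC : L →ₗ[ℝ] Hc) {n : ℕ}
    (ξ : (Fin n → L) → L) : Prop :=
  ∀ x : Fin n → L, (∀ i, x i ∈ H) → pC (ξ x) = 0

/-- Membership in the image of the inclusion `I : Λ^n𝔥*⊗𝔥^c → Λ^n𝔤*⊗𝔤`,
`ψ⊗v ↦ (p_𝔥^*ψ)⊗v`: `ξ` takes values in `𝔥^c` and only depends on the `𝔥`-components of
its arguments. -/
def inImageI (H Hc : Submodule ℝ L) (pH : L →ₗ[ℝ] H) {n : ℕ}
    (ξ : (Fin n → L) → L) : Prop :=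
  (∀ x : Fin n → L, ξ x ∈ Hc) ∧
    (∀ x : Fin n → L, ξ x = ξ (fun i => ((pH (x i) : L))))

/-- Let `𝔥 ⊆ 𝔤` be a subspace with complement `𝔥^c` (projections `p_𝔥`, `p_{𝔥^c}`).
In the graded Lie algebra `Λ^{•+1}𝔤*⊗𝔤` with the Nijenhuis–Richardson bracket:
(a) `ker P` is a graded Lie subalgebra;
(b) the image of the inclusion `I : Λ^{•+1}𝔥*⊗𝔥^c → Λ^{•+1}𝔤*⊗𝔤` is abelian;
(c) the Lie bracket `μ` of `𝔤` lies in `ker P` iff `𝔥` is a Lie subalgebra of `𝔤`. -/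
theorem statement16 (H Hc : Submodule ℝ L)
    (pH : L →ₗ[ℝ] H) (pC : L →ₗ[ℝ] Hc)
    (hsum : ∀ z : L, ((pH z : L)) + ((pC z : L)) = z)
    (hH : ∀ u : H, pH (u : L) = u)
    (hC : ∀ v : Hc, pC (v : L) = v) :
    -- (a) `ker P` is closed under the Nijenhuis–Richardson bracket
    (∀ (r s : ℕ) (ξ : AlternatingMap ℝ L L (Fin (r + 1)))
        (ψ : AlternatingMap ℝ L L (Fin (s + 1))),
      inKerP H Hc pC (⇑ξ) → inKerP H Hc pC (⇑ψ) →
        inKerP H Hc pC (nrBracket r s (⇑ξ) (⇑ψ))) ∧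
    -- (b) the image of `I` is an abelian graded Lie subalgebra
    (∀ (r s : ℕ) (ξ : AlternatingMap ℝ L L (Fin (r + 1)))
        (ψ : AlternatingMap ℝ L L (Fin (s + 1))),
      inImageI H Hc pH (⇑ξ) → inImageI H Hc pH (⇑ψ) →
        ∀ x : Fin (r + s + 1) → L, nrBracket r s (⇑ξ) (⇑ψ) x = 0) ∧
    -- (c) `μ ∈ ker P` iff `𝔥` is a Lie subalgebra
    (inKerP H Hc pC (fun x : Fin 2 → L => ⁅x 0, x 1⁆) ↔
      ∀ u v : L, u ∈ H → v ∈ H → ⁅u, v⁆ ∈ H) := by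
  -- basic facts about the projections
  have memH : ∀ z : L, pC z = 0 → z ∈ H := by
    intro z hz
    have h1 : ((pC z : L)) = 0 := by rw [hz]; rfl
    have h2 : ((pH z : L)) = z := by
      have := hsum z; rw [h1, add_zero] at this; exact this
    rw [← h2]; exact (pH z).2
  have pCzero : ∀ z : L, z ∈ H → pC z = 0 := by
    intro z hz
    have h1 : ((pH z : L)) = z := by
      have := hH ⟨z, hz⟩; exact congrArg Subtype.val this
    have h2 : ((pC z : L)) = 0 := by
      have := hsum z; rw [h1] at this; exact add_eq_left.mp this
    exact Subtype.ext h2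
  have pHzero : ∀ z : L, z ∈ Hc → ((pH z : L)) = 0 := by
    intro z hz
    have h1 : ((pC z : L)) = z := by
      have := hC ⟨z, hz⟩; exact congrArg Subtype.val this
    have := hsum z; rw [h1] at this; exact add_eq_right.mp this
  -- (a)
  have keyA : ∀ (a b : ℕ) (φ : AlternatingMap ℝ L L (Fin (a + 1)))
      (χ : AlternatingMap ℝ L L (Fin (b + 1))),
      inKerP H Hc pC (⇑φ) → inKerP H Hc pC (⇑χ) →
      ∀ y : Fin (a + b + 1) → L, (∀ i, y i ∈ H) →
        pC (nrComp a b (⇑φ) (⇑χ) y) = 0 := by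
    intro a b φ χ hφ hχ y hy
    unfold nrComp
    rw [map_sum]
    apply Finset.sum_eq_zero
    intro σ _
    rw [map_zsmul]
    have hz : pC (φ (Fin.cons
        (χ (fun i : Fin (b + 1) => y (σ ⟨(i : ℕ), by omega⟩)))
        (fun i : Fin a => y (σ ⟨b + 1 + (i : ℕ), by omega⟩)))) = 0 := by
      apply hφ
      intro i
      refine Fin.cases ?_ (fun j => ?_) i
      · rw [Fin.cons_zero]
        exact memH _ (hχ _ (fun i => hy _))
      · rw [Fin.cons_succ]
        exact hy _
    rw [hz, smul_zero]
  -- (b)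
  have keyB : ∀ (a b : ℕ) (φ : AlternatingMap ℝ L L (Fin (a + 1)))
      (χ : AlternatingMap ℝ L L (Fin (b + 1))),
      inImageI H Hc pH (⇑φ) → inImageI H Hc pH (⇑χ) →
      ∀ y : Fin (a + b + 1) → L, nrComp a b (⇑φ) (⇑χ) y = 0 := by
    intro a b φ χ hφ hχ y
    unfold nrComp
    apply Finset.sum_eq_zero
    intro σ _
    have hz : φ (Fin.cons
        (χ (fun i : Fin (b + 1) => y (σ ⟨(i : ℕ), by omega⟩)))
        (fun i : Fin a => y (σ ⟨b + 1 + (i : ℕ), by omega⟩))) = 0 := by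
      rw [hφ.2]
      apply AlternatingMap.map_coord_zero _ (0 : Fin (a + 1))
      simp only [Fin.cons_zero]
      exact pHzero _ (hχ.1 _)
    rw [hz, smul_zero]
  refine ⟨?_, ?_, ?_⟩
  · intro r s ξ ψ hξ hψ x hx
    unfold nrBracket
    rw [map_sub, map_zsmul]
    rw [keyA r s ξ ψ hξ hψ x hx, keyA s r ψ ξ hψ hξ _ (fun i => hx _),
      smul_zero, sub_zero]
  · intro r s ξ ψ hξ hψ x
    unfold nrBracket
    rw [keyB r s ξ ψ hξ hψ x, keyB s r ψ ξ hψ hξ _, smul_zero, sub_zero]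
  · constructor
    · intro h u v hu hv
      apply memH
      have := h (fun i => if i = 0 then u else v) (by
        intro i; split <;> assumption)
      simpa using this
    · intro h x hx
      exact pCzero _ (h _ _ (hx 0) (hx 1))
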